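/- Let S be a complete separable metric space, let f ∈ F₁(a,b) be admissible, and let Γ ⊂ C_b(S) be admissible. Then: (i) if Γ is strictly admissible, then W^Γ has the divergence property on Borel probability measures on S; (ii) if both f and Γ are strictly admissible, then D_f^Γ has the divergence property on Borel probability measures on S. -/

import Mathlib

open MeasureTheory Filter Set Topology ENNReal
open scoped Classical

noncomputable section

/-- The set of bounded measurable real-valued functions on `Ω`. -/
def Mb (Ω : Type*) [MeasurableSpace Ω] : Set (Ω → ℝ) :=
  {g | Measurable g ∧ ∃ C : ℝ, ∀ x, |g x| ≤ C}

/-- The set of bounded continuous real-valued functions on `S`. -/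
def Cb (S : Type*) [TopologicalSpace S] : Set (S → ℝ) :=
  {g | Continuous g ∧ ∃ C : ℝ, ∀ x, |g x| ≤ C}

/-- The positive part of an extended real number, as an element of `ℝ≥0∞`. -/
def posE (x : EReal) : ℝ≥0∞ := if x = ⊤ then ⊤ else ENNReal.ofReal x.toReal

/-- The extended-real-valued integral of an `EReal`-valued function, defined as the
difference of the lower integrals of the positive and negative parts, with the
convention `∞ - ∞ = -∞`. -/
def eIntegral {Ω : Type*} [MeasurableSpace Ω] (P : Measure Ω) (h : Ω → EReal) : EReal :=
  ((∫⁻ x, posE (h x) ∂P : ℝ≥0∞) : EReal) - ((∫⁻ x, posE (-(h x)) ∂P : ℝ≥0∞) : EReal)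

/-- The Legendre transform `f*(y) = sup_x {x*y - f(x)}` of `f : ℝ → (-∞,∞]`. -/
def fstar (f : ℝ → EReal) (y : ℝ) : EReal := ⨆ x : ℝ, (((x * y : ℝ) : EReal) - f x)

/-- `f : ℝ → (-∞,∞]` is (the convex LSC extension of) an element of `F₁(a,b)`:
convex, lower semicontinuous, never `-∞`, finite exactly on the interval `(a,b)`
(with `+∞` strictly outside `[a,b]`), and `f(1) = 0` with `a < 1 < b`. -/
structure IsF1 (a b : EReal) (f : ℝ → EReal) : Prop where
  a_lt_one : a < ((1 : ℝ) : EReal)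
  one_lt_b : ((1 : ℝ) : EReal) < b
  convex : ∀ x y t : ℝ, 0 < t → t < 1 →
    f (t * x + (1 - t) * y) ≤ ((t : ℝ) : EReal) * f x + (((1 - t : ℝ)) : EReal) * f y
  lsc : LowerSemicontinuous f
  ne_bot : ∀ x, f x ≠ ⊥
  finite_on : ∀ x : ℝ, a < (x : EReal) → (x : EReal) < b → f x ≠ ⊤
  top_outside : ∀ x : ℝ, ((x : EReal) < a ∨ b < (x : EReal)) → f x = ⊤
  at_one : f 1 = 0

/-- `Λ_f^P[g] = inf_{ν ∈ ℝ} {ν + E_P[f*(g - ν)]}`. -/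
def LambdaF {Ω : Type*} [MeasurableSpace Ω] (f : ℝ → EReal) (P : Measure Ω) (g : Ω → ℝ) :
    EReal :=
  ⨅ ν : ℝ, ((ν : EReal) + eIntegral P (fun x => fstar f (g x - ν)))

/-- The classical `f`-divergence `D_f(Q‖P) = E_P[f(dQ/dP)]` if `Q ≪ P`, else `∞`. -/
def fDivE {Ω : Type*} [MeasurableSpace Ω] (f : ℝ → EReal) (Q P : Measure Ω) : EReal :=
  if Q ≪ P then eIntegral P (fun x => f ((Q.rnDeriv P x).toReal)) else ⊤

/-- The `(f,Γ)`-divergence `D_f^Γ(Q‖P) = sup_{g ∈ Γ} {E_Q[g] - Λ_f^P[g]}`. -/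
def fGammaDiv {Ω : Type*} [MeasurableSpace Ω] (f : ℝ → EReal) (Γ : Set (Ω → ℝ))
    (Q P : Measure Ω) : EReal :=
  ⨆ g ∈ Γ, (((∫ x, g x ∂Q : ℝ) : EReal) - LambdaF f P g)

/-- The `Γ`-IPM `W^Γ(Q,P) = sup_{g ∈ Γ} {E_Q[g] - E_P[g]}`. -/
def ipmW {Ω : Type*} [MeasurableSpace Ω] (Γ : Set (Ω → ℝ)) (Q P : Measure Ω) : EReal :=
  ⨆ g ∈ Γ, (((∫ x, g x ∂Q : ℝ) : EReal) - ((∫ x, g x ∂P : ℝ) : EReal))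


/-- Integration of a function against a finite signed measure, via the Jordan
decomposition. -/
def signedIntegral {S : Type*} [MeasurableSpace S] (μ : MeasureTheory.SignedMeasure S)
    (g : S → ℝ) : ℝ :=
  (∫ x, g x ∂μ.toJordanDecomposition.posPart) - ∫ x, g x ∂μ.toJordanDecomposition.negPart

/-- The weak topology on real-valued functions on `S` generated by the maps
`g ↦ ∫ g dμ` for all finite signed (Borel) measures `μ` on `S`. -/
def weakTop (S : Type*) [MeasurableSpace S] : TopologicalSpace (S → ℝ) :=
  ⨅ μ : MeasureTheory.SignedMeasure S,
    TopologicalSpace.induced (fun g => signedIntegral μ g) inferInstance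

/-- A set `Ψ` of functions is `P(S)`-determining: if two probability measures give the
same integral to every `ψ ∈ Ψ`, then they are equal. -/
def Determining {S : Type*} [MeasurableSpace S] (Ψ : Set (S → ℝ)) : Prop :=
  ∀ Q P : Measure S, IsProbabilityMeasure Q → IsProbabilityMeasure P →
    (∀ ψ ∈ Ψ, (∫ x, ψ x ∂Q) = ∫ x, ψ x ∂P) → Q = P

/-- `Γ ⊆ C_b(S)` is admissible: it contains `0`, is convex, and is closed in `C_b(S)` for
the weak topology generated by the finite signed measures. -/
def AdmissibleGamma {S : Type*} [TopologicalSpace S] [MeasurableSpace S]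
    (Γ : Set (S → ℝ)) : Prop :=
  (fun _ => (0 : ℝ)) ∈ Γ ∧ Convex ℝ Γ ∧ Γ ⊆ Cb S ∧
    ∀ g ∈ Cb S, g ∈ @closure _ (weakTop S) Γ → g ∈ Γ

/-- `Γ` is strictly admissible: there is a `P(S)`-determining set `Ψ ⊆ C_b(S)` such that
for all `ψ ∈ Ψ` there are `c ∈ ℝ` and `ε > 0` with `c ± εψ ∈ Γ`. -/
def StrictlyAdmissibleGamma {S : Type*} [TopologicalSpace S] [MeasurableSpace S]
    (Γ : Set (S → ℝ)) : Prop :=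
  ∃ Ψ : Set (S → ℝ), Ψ ⊆ Cb S ∧ Determining Ψ ∧
    ∀ ψ ∈ Ψ, ∃ c ε : ℝ, 0 < ε ∧
      (fun x => c + ε * ψ x) ∈ Γ ∧ (fun x => c - ε * ψ x) ∈ Γ

/-- `f` is admissible: `f*` is finite everywhere and `lim_{y → -∞} f*(y) < ∞`. -/
def AdmissibleF (f : ℝ → EReal) : Prop :=
  (∀ y : ℝ, fstar f y ≠ ⊤) ∧ ∃ M : ℝ, ∀ᶠ y in Filter.atBot, fstar f y ≤ (M : EReal)

/-- `f` is strictly convex at `1`: `f` is not affine on any neighborhood of `1`. -/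
def StrictlyConvexAtOne (f : ℝ → EReal) : Prop :=
  ∀ ε : ℝ, 0 < ε → ¬ ∃ m q : ℝ, ∀ x : ℝ, |x - 1| < ε → f x = ((m * x + q : ℝ) : EReal)

/-- `f` is strictly convex on the interval `(a,b)` (with `a, b ∈ [-∞,∞]`). -/
def StrictConvexOnAB (a b : EReal) (f : ℝ → EReal) : Prop :=
  ∀ x y t : ℝ, a < (x : EReal) → (x : EReal) < b → a < (y : EReal) → (y : EReal) < b →
    x ≠ y → 0 < t → t < 1 →
    f (t * x + (1 - t) * y) < ((t : ℝ) : EReal) * f x + (((1 - t : ℝ)) : EReal) * f y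

end

section Stmt11Aux

/-! ### Basic `EReal` helpers -/

lemma eCoe_sub_le {c r : ℝ} {z : EReal} (h : (r : EReal) ≤ z) :
    (c : EReal) - z ≤ ((c - r : ℝ) : EReal) := by
  induction z using EReal.rec with
  | bot => simp at h
  | coe zr =>
      rw [← EReal.coe_sub]
      have hrz : r ≤ zr := by exact_mod_cast h
      exact EReal.coe_le_coe_iff.mpr (by linarith)
  | top =>
      rw [EReal.sub_top]; exact bot_le

lemma posE_coe (r : ℝ) : posE ((r : ℝ) : EReal) = ENNReal.ofReal r := by
  simp [posE]

lemma posE_mono {x y : EReal} (h : x ≤ y) : posE x ≤ posE y := by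
  induction x using EReal.rec with
  | bot => simp [posE]
  | top =>
      have hy : y = ⊤ := top_le_iff.mp h
      rw [hy]
  | coe xr =>
    induction y using EReal.rec with
    | bot => simp at h
    | top => simp [posE]
    | coe yr =>
      rw [posE_coe, posE_coe]
      exact ENNReal.ofReal_le_ofReal (by exact_mod_cast h)

lemma eCoe_ennreal (p : ℝ≥0∞) (hp : p ≠ ⊤) : (p : EReal) = ((p.toReal : ℝ) : EReal) := by
  conv_lhs => rw [← ENNReal.ofReal_toReal hp]
  rw [EReal.coe_ennreal_ofReal, max_eq_left ENNReal.toReal_nonneg]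

/-! ### `eIntegral` helpers -/

lemma eIntegral_mono {Ω : Type*} [MeasurableSpace Ω] (P : Measure Ω) {h₁ h₂ : Ω → EReal}
    (h : ∀ x, h₁ x ≤ h₂ x) : eIntegral P h₁ ≤ eIntegral P h₂ := by
  refine EReal.sub_le_sub ?_ ?_
  · exact EReal.coe_ennreal_le_coe_ennreal_iff.mpr (lintegral_mono fun x => posE_mono (h x))
  · exact EReal.coe_ennreal_le_coe_ennreal_iff.mpr
      (lintegral_mono fun x => posE_mono (EReal.neg_le_neg_iff.mpr (h x)))

lemma eIntegral_coe {Ω : Type*} [MeasurableSpace Ω] {P : Measure Ω} {h : Ω → ℝ}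
    (hi : MeasureTheory.Integrable h P) :
    eIntegral P (fun x => ((h x : ℝ) : EReal)) = ((∫ x, h x ∂P : ℝ) : EReal) := by
  have hfin : ∀ u : Ω → ℝ, (∀ x, |u x| ≤ |h x|) → (∫⁻ x, ENNReal.ofReal (u x) ∂P) ≠ ⊤ := by
    intro u hu
    refine ne_of_lt (lt_of_le_of_lt (lintegral_mono fun x => ?_) hi.2)
    rw [Real.enorm_eq_ofReal_abs]
    exact ENNReal.ofReal_le_ofReal ((le_abs_self _).trans (hu x))
  have e1 : (fun x => posE ((h x : ℝ) : EReal)) = fun x => ENNReal.ofReal (h x) := by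
    funext x; exact posE_coe _
  have e2 : (fun x => posE (-((h x : ℝ) : EReal))) = fun x => ENNReal.ofReal (-h x) := by
    funext x; rw [← EReal.coe_neg]; exact posE_coe _
  rw [eIntegral, e1, e2]
  have hpt : (∫⁻ x, ENNReal.ofReal (h x) ∂P) ≠ ⊤ := hfin h fun x => le_rfl
  have hnt : (∫⁻ x, ENNReal.ofReal (-h x) ∂P) ≠ ⊤ := hfin (fun x => -h x) fun x => by
    rw [abs_neg]
  rw [eCoe_ennreal _ hpt, eCoe_ennreal _ hnt, ← EReal.coe_sub,
    integral_eq_lintegral_pos_part_sub_lintegral_neg_part hi]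

lemma integrable_of_bdd {Ω : Type*} [MeasurableSpace Ω] {P : Measure Ω} [IsFiniteMeasure P]
    {h : Ω → ℝ} (hm : MeasureTheory.AEStronglyMeasurable h P) {C : ℝ} (hC : ∀ x, |h x| ≤ C) :
    MeasureTheory.Integrable h P :=
  MeasureTheory.Integrable.mono' (integrable_const C) hm (ae_of_all _ fun x => by
    simpa using hC x)

lemma eIntegral_le_of_bound {Ω : Type*} [MeasurableSpace Ω] {P : Measure Ω}
    {h : Ω → EReal} {u : Ω → ℝ} (hu : MeasureTheory.Integrable u P)
    (hle : ∀ x, h x ≤ ((u x : ℝ) : EReal)) :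
    eIntegral P h ≤ ((∫ x, u x ∂P : ℝ) : EReal) :=
  le_trans (eIntegral_mono P hle) (le_of_eq (eIntegral_coe hu))

lemma eIntegral_ge_of_bound {Ω : Type*} [MeasurableSpace Ω] {P : Measure Ω}
    {h : Ω → EReal} {u : Ω → ℝ} (hu : MeasureTheory.Integrable u P)
    (hle : ∀ x, ((u x : ℝ) : EReal) ≤ h x) :
    ((∫ x, u x ∂P : ℝ) : EReal) ≤ eIntegral P h :=
  le_trans (le_of_eq (eIntegral_coe hu).symm) (eIntegral_mono P hle)

end Stmt11Aux


section Stmt11Convex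

variable {a b : EReal} {f : ℝ → EReal}

lemma freal (hf : IsF1 a b f) {x : ℝ} (h1 : a < (x : EReal)) (h2 : (x : EReal) < b) :
    f x = (((f x).toReal : ℝ) : EReal) :=
  (EReal.coe_toReal (hf.finite_on x h1 h2) (hf.ne_bot x)).symm

lemma f1coe (hf : IsF1 a b f) : f 1 = (((0 : ℝ) : ℝ) : EReal) := by
  rw [hf.at_one]; rfl

lemma exists_left (hf : IsF1 a b f) : ∃ x₀ : ℝ, x₀ < 1 ∧ a < (x₀ : EReal) := by
  obtain ⟨c, hc1, hc2⟩ := exists_between hf.a_lt_one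
  induction c using EReal.rec with
  | bot => exact absurd hc1 (by simp)
  | top => exact absurd hc2 (by simp)
  | coe cr => exact ⟨cr, by exact_mod_cast hc2, hc1⟩

lemma exists_right (hf : IsF1 a b f) : ∃ z₀ : ℝ, 1 < z₀ ∧ (z₀ : EReal) < b := by
  obtain ⟨c, hc1, hc2⟩ := exists_between hf.one_lt_b
  induction c using EReal.rec with
  | bot => exact absurd hc1 (by simp)
  | top => exact absurd hc2 (by simp)
  | coe cr => exact ⟨cr, by exact_mod_cast hc1, hc2⟩

lemma convex_real (hf : IsF1 a b f) {u w t : ℝ} (ht0 : 0 < t) (ht1 : t < 1)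
    {fu fw : ℝ} (hu : f u = ((fu : ℝ) : EReal)) (hw : f w = ((fw : ℝ) : EReal)) :
    f (t * u + (1 - t) * w) ≤ ((t * fu + (1 - t) * fw : ℝ) : EReal) := by
  have h := hf.convex u w t ht0 ht1
  rwa [hu, hw, ← EReal.coe_mul, ← EReal.coe_mul, ← EReal.coe_add] at h

lemma slope_key (hf : IsF1 a b f) {x z fx fz : ℝ} (hx : x < 1) (hz : 1 < z)
    (hfx : f x = ((fx : ℝ) : EReal)) (hfz : f z = ((fz : ℝ) : EReal)) :
    -fx / (1 - x) ≤ fz / (z - 1) := by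
  have hzx : (0:ℝ) < z - x := by linarith
  set t : ℝ := (z - 1) / (z - x) with htd
  have ht0 : 0 < t := div_pos (by linarith) hzx
  have ht1 : t < 1 := (div_lt_one hzx).mpr (by linarith)
  have hmid : t * x + (1 - t) * z = 1 := by rw [htd]; field_simp <;> ring
  have h := convex_real hf ht0 ht1 hfx hfz
  rw [hmid, hf.at_one] at h
  have h' : (0:ℝ) ≤ t * fx + (1 - t) * fz := by exact_mod_cast h
  have h3 : (z - x) * (t * fx + (1 - t) * fz) = (z - 1) * fx + (1 - x) * fz := by
    rw [htd]; field_simp <;> ring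
  have h2 : (0:ℝ) ≤ (z - 1) * fx + (1 - x) * fz := by nlinarith [mul_nonneg hzx.le h']
  rw [div_le_div_iff₀ (by linarith) (by linarith)]
  nlinarith [h2]

lemma exists_subgrad (hf : IsF1 a b f) :
    ∃ y₀ : ℝ, ∀ x : ℝ, ((y₀ * (x - 1) : ℝ) : EReal) ≤ f x := by
  obtain ⟨x₀, hx₀1, hax₀⟩ := exists_left hf
  obtain ⟨z₀, hz₀1, hz₀b⟩ := exists_right hf
  have hcoe1 : ∀ u v : ℝ, u < v → ((u : ℝ) : EReal) < ((v : ℝ) : EReal) := fun u v h =>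
    EReal.coe_lt_coe_iff.mpr h
  have hinterior : ∀ z : ℝ, 1 < z → (z : EReal) < b → a < (z : EReal) := fun z hz _ =>
    lt_trans hf.a_lt_one (hcoe1 1 z hz)
  have hinterior' : ∀ z : ℝ, z < 1 → a < (z : EReal) → (z : EReal) < b := fun z hz _ =>
    lt_trans (hcoe1 z 1 hz) hf.one_lt_b
  set Sl : Set ℝ := (fun z => (f z).toReal / (z - 1)) '' {z : ℝ | 1 < z ∧ (z : EReal) < b}
    with hSl
  have hne : Sl.Nonempty := ⟨_, ⟨z₀, ⟨hz₀1, hz₀b⟩, rfl⟩⟩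
  have hlb : ∀ {x : ℝ}, x < 1 → a < (x : EReal) → ∀ s ∈ Sl, -(f x).toReal / (1 - x) ≤ s := by
    rintro x hx1 hax s ⟨z, ⟨hz1, hzb⟩, rfl⟩
    exact slope_key hf hx1 hz1 (freal hf hax (hinterior' x hx1 hax))
      (freal hf (hinterior z hz1 hzb) hzb)
  have hbdd : BddBelow Sl := ⟨-(f x₀).toReal / (1 - x₀), hlb hx₀1 hax₀⟩
  set y₀ : ℝ := sInf Sl with hy₀
  have hint : ∀ x : ℝ, a < (x : EReal) → (x : EReal) < b → y₀ * (x - 1) ≤ (f x).toReal := by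
    intro x hax hxb
    rcases lt_trichotomy x 1 with hx1 | hx1 | hx1
    · have h1 : -(f x).toReal / (1 - x) ≤ y₀ := le_csInf hne (hlb hx1 hax)
      have h2 : -(f x).toReal ≤ y₀ * (1 - x) := (div_le_iff₀ (by linarith)).mp h1
      nlinarith
    · subst hx1
      simp [hf.at_one]
    · have h1 : y₀ ≤ (f x).toReal / (x - 1) := csInf_le hbdd ⟨x, ⟨hx1, hxb⟩, rfl⟩
      have h2 : y₀ * (x - 1) ≤ (f x).toReal := by
        rw [le_div_iff₀ (by linarith)] at h1; linarith
      exact h2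
  refine ⟨y₀, fun x => ?_⟩
  rcases lt_trichotomy ((x : ℝ) : EReal) a with hxa | hxa | hxa
  · rw [hf.top_outside x (Or.inl hxa)]; exact le_top
  · -- x is the left endpoint
    by_cases hft : f x = ⊤
    · rw [hft]; exact le_top
    · have hx1 : x < 1 := by
        have := hf.a_lt_one; rw [← hxa] at this; exact_mod_cast this
      have hfx : f x = (((f x).toReal : ℝ) : EReal) := (EReal.coe_toReal hft (hf.ne_bot x)).symm
      set p : ℝ := (x + 1) / 2 with hpd
      have hxp : x < p := by rw [hpd]; linarith
      have hp1 : p < 1 := by rw [hpd]; linarith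
      have hap : a < (p : EReal) := by rw [← hxa]; exact hcoe1 x p hxp
      have hpb : (p : EReal) < b := hinterior' p hp1 hap
      have hfp := hint p hap hpb
      have hcv := convex_real hf (by norm_num : (0:ℝ) < 1/2) (by norm_num) hfx (f1coe hf)
      rw [show (1/2 : ℝ) * x + (1 - 1/2) * 1 = p by rw [hpd]; ring] at hcv
      rw [freal hf hap hpb] at hcv
      have hcv' : (f p).toReal ≤ 1/2 * (f x).toReal := by
        have := EReal.coe_le_coe_iff.mp hcv; linarith
      rw [hfx]
      refine EReal.coe_le_coe_iff.mpr ?_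
      have hfp' : y₀ * ((x - 1)/2) ≤ (f p).toReal := by
        rw [show (x - 1)/2 = p - 1 by rw [hpd]; ring]; exact hfp
      nlinarith [hfp', hcv']
  · rcases lt_trichotomy ((x : ℝ) : EReal) b with hxb | hxb | hxb
    · rw [freal hf hxa hxb]
      exact EReal.coe_le_coe_iff.mpr (hint x hxa hxb)
    · -- x is the right endpoint
      by_cases hft : f x = ⊤
      · rw [hft]; exact le_top
      · have hx1 : 1 < x := by
          have := hf.one_lt_b; rw [← hxb] at this; exact_mod_cast this
        have hfx : f x = (((f x).toReal : ℝ) : EReal) :=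
          (EReal.coe_toReal hft (hf.ne_bot x)).symm
        set p : ℝ := (x + 1) / 2 with hpd
        have hpx : p < x := by rw [hpd]; linarith
        have h1p : 1 < p := by rw [hpd]; linarith
        have hpb : (p : EReal) < b := by rw [← hxb]; exact hcoe1 p x hpx
        have hap : a < (p : EReal) := hinterior p h1p hpb
        have hfp := hint p hap hpb
        have hcv := convex_real hf (by norm_num : (0:ℝ) < 1/2) (by norm_num) (f1coe hf) hfx
        rw [show (1/2 : ℝ) * 1 + (1 - 1/2) * x = p by rw [hpd]; ring] at hcv
        rw [freal hf hap hpb] at hcv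
        have hcv' : (f p).toReal ≤ 1/2 * (f x).toReal := by
          have := EReal.coe_le_coe_iff.mp hcv; linarith
        rw [hfx]
        refine EReal.coe_le_coe_iff.mpr ?_
        have hfp' : y₀ * ((x - 1)/2) ≤ (f p).toReal := by
          rw [show (x - 1)/2 = p - 1 by rw [hpd]; ring]; exact hfp
        nlinarith [hfp', hcv']
    · rw [hf.top_outside x (Or.inr hxb)]; exact le_top

end Stmt11Convex


section Stmt11Fstar

variable {a b : EReal} {f : ℝ → EReal}

lemma fstar_ge (hf : IsF1 a b f) (y : ℝ) : ((y : ℝ) : EReal) ≤ fstar f y := by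
  have h1 : ((1 * y : ℝ) : EReal) - f 1 = ((y : ℝ) : EReal) := by
    rw [hf.at_one, one_mul]
    exact sub_zero _
  calc ((y : ℝ) : EReal) = ((1 * y : ℝ) : EReal) - f 1 := h1.symm
    _ ≤ fstar f y := le_iSup (fun x : ℝ => (((x * y : ℝ) : EReal) - f x)) 1

lemma fstar_y0_le {y₀ : ℝ} (hsub : ∀ x : ℝ, ((y₀ * (x - 1) : ℝ) : EReal) ≤ f x) :
    fstar f y₀ ≤ ((y₀ : ℝ) : EReal) := by
  refine iSup_le fun x => ?_
  refine le_trans (eCoe_sub_le (hsub x)) (le_of_eq ?_)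
  norm_cast
  ring

lemma sides (hf : IsF1 a b f) (hsc : StrictlyConvexAtOne f) {y₀ : ℝ}
    (hsub : ∀ x : ℝ, ((y₀ * (x - 1) : ℝ) : EReal) ≤ f x) :
    (∀ z : ℝ, 1 < z → ((y₀ * (z - 1) : ℝ) : EReal) < f z)
    ∨ (∀ z : ℝ, z < 1 → ((y₀ * (z - 1) : ℝ) : EReal) < f z) := by
  by_contra hcon
  push_neg at hcon
  obtain ⟨⟨p, hp1, hfp⟩, ⟨q, hq1, hfq⟩⟩ := hcon
  have hfp' : f p = ((y₀ * (p - 1) : ℝ) : EReal) := le_antisymm hfp (hsub p)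
  have hfq' : f q = ((y₀ * (q - 1) : ℝ) : EReal) := le_antisymm hfq (hsub q)
  refine hsc (min (p - 1) (1 - q)) (lt_min (by linarith) (by linarith))
    ⟨y₀, -y₀, fun x hx => ?_⟩
  have habs := abs_lt.mp hx
  have hm1 : min (p - 1) (1 - q) ≤ p - 1 := min_le_left _ _
  have hm2 : min (p - 1) (1 - q) ≤ 1 - q := min_le_right _ _
  have hxp : x < p := by linarith [habs.2]
  have hqx : q < x := by linarith [habs.1]
  have hpq : (0:ℝ) < p - q := by linarith
  set t : ℝ := (p - x) / (p - q) with htd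
  have ht0 : 0 < t := div_pos (by linarith) hpq
  have ht1 : t < 1 := (div_lt_one hpq).mpr (by linarith)
  have hmid : t * q + (1 - t) * p = x := by rw [htd]; field_simp <;> ring
  have hcv := convex_real hf ht0 ht1 hfq' hfp'
  rw [hmid] at hcv
  have hcv2 : f x ≤ ((y₀ * (x - 1) : ℝ) : EReal) := by
    refine le_trans hcv (le_of_eq ?_)
    norm_cast
    rw [← hmid]; ring
  have hfx : f x = ((y₀ * (x - 1) : ℝ) : EReal) := le_antisymm hcv2 (hsub x)
  rw [hfx]
  norm_cast
  ring

lemma caseA_bound (hf : IsF1 a b f) {y₀ : ℝ}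
    (hsub : ∀ x : ℝ, ((y₀ * (x - 1) : ℝ) : EReal) ≤ f x)
    (hA : ∀ z : ℝ, 1 < z → ((y₀ * (z - 1) : ℝ) : EReal) < f z)
    {ε : ℝ} (hε : 0 < ε) :
    ∃ s₀ : ℝ, 0 < s₀ ∧ ∀ s : ℝ, 0 < s → s ≤ s₀ →
      fstar f (y₀ + s) ≤ ((y₀ + s + ε * s : ℝ) : EReal) := by
  obtain ⟨z₀, hz₀1, hz₀b⟩ := exists_right hf
  set ε' : ℝ := min ε (z₀ - 1) with hε'd
  have hε'0 : 0 < ε' := lt_min hε (by linarith)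
  have hε'ε : ε' ≤ ε := min_le_left _ _
  have h1b : ((1 + ε' : ℝ) : EReal) < b :=
    lt_of_le_of_lt (EReal.coe_le_coe_iff.mpr (by
      have := min_le_right ε (z₀ - 1); linarith)) hz₀b
  have ha1 : a < ((1 + ε' : ℝ) : EReal) :=
    lt_trans hf.a_lt_one (EReal.coe_lt_coe_iff.mpr (by linarith))
  set w₁ : ℝ := (f (1 + ε')).toReal with hw₁d
  have hw : f (1 + ε') = ((w₁ : ℝ) : EReal) := freal hf ha1 h1b
  have hδ : y₀ * ε' < w₁ := by
    have h := hA (1 + ε') (by linarith)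
    rw [hw] at h
    have h' : y₀ * (1 + ε' - 1) < w₁ := by exact_mod_cast h
    linarith [h'.trans_le (le_refl w₁), (by ring : y₀ * (1 + ε' - 1) = y₀ * ε')]
  set δ : ℝ := w₁ - y₀ * ε' with hδd
  have hδ0 : 0 < δ := by rw [hδd]; linarith
  refine ⟨δ / ε', div_pos hδ0 hε'0, fun s hs0 hss => ?_⟩
  refine iSup_le fun x => ?_
  have key : ((y₀ * (x - 1) + s * (x - 1 - ε') : ℝ) : EReal) ≤ f x := by
    rcases le_or_gt x (1 + ε') with hx | hx
    · refine le_trans (EReal.coe_le_coe_iff.mpr ?_) (hsub x)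
      nlinarith
    · by_cases hft : f x = ⊤
      · rw [hft]; exact le_top
      · have hfx : f x = (((f x).toReal : ℝ) : EReal) :=
          (EReal.coe_toReal hft (hf.ne_bot x)).symm
        set w : ℝ := (f x).toReal with hwd
        have hx1 : (0:ℝ) < x - 1 := by linarith
        set t : ℝ := (x - 1 - ε') / (x - 1) with htd
        have ht0 : 0 < t := div_pos (by linarith) hx1
        have ht1 : t < 1 := (div_lt_one hx1).mpr (by linarith)
        have hmid : t * 1 + (1 - t) * x = 1 + ε' := by rw [htd]; field_simp <;> ring
        have hcv := convex_real hf ht0 ht1 (f1coe hf) hfx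
        rw [hmid, hw] at hcv
        have h' : w₁ ≤ t * 0 + (1 - t) * w := by exact_mod_cast hcv
        have h1t' : (1 - t) * (x - 1) = ε' := by
          rw [htd]; field_simp; ring
        have hww : w₁ * (x - 1) ≤ ε' * w := by
          have hm := mul_le_mul_of_nonneg_right h' hx1.le
          have hr : (t * 0 + (1 - t) * w) * (x - 1) = ε' * w := by
            rw [← h1t']; ring
          linarith [hm]
        rw [hfx]
        refine EReal.coe_le_coe_iff.mpr ?_
        have hsε : s * ε' ≤ δ := (le_div_iff₀ hε'0).mp hss
        -- goal : y₀ * (x - 1) + s * (x - 1 - ε') ≤ w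
        have h2 : s * ε' * (x - 1 - ε') ≤ δ * (x - 1 - ε') :=
          mul_le_mul_of_nonneg_right hsε (by linarith)
        have h3 : δ * (x - 1 - ε') ≤ δ * (x - 1) :=
          mul_le_mul_of_nonneg_left (by linarith) hδ0.le
        -- multiply goal by ε' > 0
        rw [← mul_le_mul_iff_of_pos_left hε'0]
        nlinarith [h2, h3, hww]
  refine le_trans (eCoe_sub_le key) (EReal.coe_le_coe_iff.mpr ?_)
  nlinarith [mul_le_mul_of_nonneg_right hε'ε hs0.le]

lemma caseB_bound (hf : IsF1 a b f) {y₀ : ℝ}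
    (hsub : ∀ x : ℝ, ((y₀ * (x - 1) : ℝ) : EReal) ≤ f x)
    (hB : ∀ z : ℝ, z < 1 → ((y₀ * (z - 1) : ℝ) : EReal) < f z)
    {ε : ℝ} (hε : 0 < ε) :
    ∃ s₀ : ℝ, 0 < s₀ ∧ ∀ s : ℝ, s < 0 → -s₀ ≤ s →
      fstar f (y₀ + s) ≤ ((y₀ + s - ε * s : ℝ) : EReal) := by
  obtain ⟨x₀, hx₀1, hax₀⟩ := exists_left hf
  set ε' : ℝ := min ε (1 - x₀) with hε'd
  have hε'0 : 0 < ε' := lt_min hε (by linarith)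
  have hε'ε : ε' ≤ ε := min_le_left _ _
  have h1a : a < ((1 - ε' : ℝ) : EReal) :=
    lt_of_lt_of_le hax₀ (EReal.coe_le_coe_iff.mpr (by
      have := min_le_right ε (1 - x₀); linarith))
  have h1b : ((1 - ε' : ℝ) : EReal) < b :=
    lt_trans (EReal.coe_lt_coe_iff.mpr (by linarith)) hf.one_lt_b
  set w₁ : ℝ := (f (1 - ε')).toReal with hw₁d
  have hw : f (1 - ε') = ((w₁ : ℝ) : EReal) := freal hf h1a h1b
  have hδ : -(y₀ * ε') < w₁ := by
    have h := hB (1 - ε') (by linarith)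
    rw [hw] at h
    have h' : y₀ * (1 - ε' - 1) < w₁ := by exact_mod_cast h
    nlinarith [h']
  set δ : ℝ := w₁ + y₀ * ε' with hδd
  have hδ0 : 0 < δ := by rw [hδd]; linarith
  refine ⟨δ / ε', div_pos hδ0 hε'0, fun s hs0 hss => ?_⟩
  refine iSup_le fun x => ?_
  have key : ((y₀ * (x - 1) + s * (x - 1 + ε') : ℝ) : EReal) ≤ f x := by
    rcases le_or_gt (1 - ε') x with hx | hx
    · refine le_trans (EReal.coe_le_coe_iff.mpr ?_) (hsub x)
      nlinarith
    · by_cases hft : f x = ⊤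
      · rw [hft]; exact le_top
      · have hfx : f x = (((f x).toReal : ℝ) : EReal) :=
          (EReal.coe_toReal hft (hf.ne_bot x)).symm
        set w : ℝ := (f x).toReal with hwd
        have hx1 : (0:ℝ) < 1 - x := by linarith
        set t : ℝ := ε' / (1 - x) with htd
        have ht0 : 0 < t := div_pos hε'0 hx1
        have ht1 : t < 1 := (div_lt_one hx1).mpr (by linarith)
        have hmid : t * x + (1 - t) * 1 = 1 - ε' := by rw [htd]; field_simp <;> ring
        have hcv := convex_real hf ht0 ht1 hfx (f1coe hf)
        rw [hmid, hw] at hcv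
        have h' : w₁ ≤ t * w + (1 - t) * 0 := by exact_mod_cast hcv
        have h1t' : t * (1 - x) = ε' := by
          rw [htd]; field_simp
        have hww : w₁ * (1 - x) ≤ ε' * w := by
          have hm := mul_le_mul_of_nonneg_right h' hx1.le
          have hr : (t * w + (1 - t) * 0) * (1 - x) = ε' * w := by
            rw [← h1t']; ring
          linarith [hm]
        rw [hfx]
        refine EReal.coe_le_coe_iff.mpr ?_
        have hsε : -s * ε' ≤ δ := by
          have : -s ≤ δ / ε' := by linarith [hss]
          exact (le_div_iff₀ hε'0).mp this
        have h2 : -s * ε' * (1 - x - ε') ≤ δ * (1 - x - ε') :=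
          mul_le_mul_of_nonneg_right hsε (by linarith)
        have h3 : δ * (1 - x - ε') ≤ δ * (1 - x) :=
          mul_le_mul_of_nonneg_left (by linarith) hδ0.le
        rw [← mul_le_mul_iff_of_pos_left hε'0]
        nlinarith [h2, h3, hww]
  refine le_trans (eCoe_sub_le key) (EReal.coe_le_coe_iff.mpr ?_)
  nlinarith [mul_le_mul_of_nonneg_right hε'ε (neg_nonneg.mpr hs0.le)]

end Stmt11Fstar


section Stmt11Lambda

variable {a b : EReal} {f : ℝ → EReal}

lemma lambda_ge (hf : IsF1 a b f) {Ω : Type*} [MeasurableSpace Ω] {P : Measure Ω}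
    [IsProbabilityMeasure P] {g : Ω → ℝ} (hg : MeasureTheory.Integrable g P) :
    ((∫ x, g x ∂P : ℝ) : EReal) ≤ LambdaF f P g := by
  refine le_iInf fun ν => ?_
  have h1 : ((∫ x, (g x - ν) ∂P : ℝ) : EReal) ≤ eIntegral P (fun x => fstar f (g x - ν)) :=
    eIntegral_ge_of_bound (hg.sub (integrable_const ν)) fun x => fstar_ge hf _
  have h2 : ∫ x, (g x - ν) ∂P = (∫ x, g x ∂P) - ν := by
    rw [integral_sub hg (integrable_const ν), integral_const]
    simp
  rw [h2] at h1
  calc ((∫ x, g x ∂P : ℝ) : EReal) = (ν : EReal) + (((∫ x, g x ∂P) - ν : ℝ) : EReal) := by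
        rw [← EReal.coe_add]; norm_cast; ring
    _ ≤ (ν : EReal) + eIntegral P (fun x => fstar f (g x - ν)) := add_le_add_right h1 _

lemma lambda_zero_le {y₀ : ℝ} (hsub : ∀ x : ℝ, ((y₀ * (x - 1) : ℝ) : EReal) ≤ f x)
    {Ω : Type*} [MeasurableSpace Ω] (P : Measure Ω) [IsProbabilityMeasure P] :
    LambdaF f P (fun _ => (0 : ℝ)) ≤ 0 := by
  refine iInf_le_of_le (-y₀) ?_
  have hb : eIntegral P (fun _ : Ω => fstar f ((0 : ℝ) - (-y₀))) ≤ ((y₀ : ℝ) : EReal) := by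
    have : ∀ x : Ω, fstar f ((0 : ℝ) - (-y₀)) ≤ (((fun _ : Ω => y₀) x : ℝ) : EReal) := by
      intro x
      rw [show (0 : ℝ) - (-y₀) = y₀ by ring]
      exact fstar_y0_le hsub
    refine le_trans (eIntegral_le_of_bound (integrable_const y₀) this) (le_of_eq ?_)
    rw [integral_const]
    simp
  calc ((-y₀ : ℝ) : EReal) + eIntegral P (fun _ : Ω => fstar f ((0 : ℝ) - (-y₀)))
      ≤ ((-y₀ : ℝ) : EReal) + ((y₀ : ℝ) : EReal) := add_le_add_right hb _
    _ = 0 := by norm_cast; ring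

end Stmt11Lambda


lemma det_of_le {S : Type*} [TopologicalSpace S] [MeasurableSpace S] [OpensMeasurableSpace S]
    {Γ : Set (S → ℝ)} (hsΓ : StrictlyAdmissibleGamma Γ)
    {Q P : MeasureTheory.Measure S} (hQ : MeasureTheory.IsProbabilityMeasure Q)
    (hP : MeasureTheory.IsProbabilityMeasure P)
    (hle : ∀ g ∈ Γ, (∫ x, g x ∂Q) ≤ ∫ x, g x ∂P) : Q = P := by
  obtain ⟨Ψ, hΨCb, hdet, hΨΓ⟩ := hsΓ
  refine hdet Q P hQ hP fun ψ hψ => ?_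
  obtain ⟨c, ε, hε, hg1, hg2⟩ := hΨΓ ψ hψ
  obtain ⟨hψc, Cψ, hCψ⟩ := hΨCb hψ
  have hiQ : MeasureTheory.Integrable ψ Q := integrable_of_bdd hψc.aestronglyMeasurable hCψ
  have hiP : MeasureTheory.Integrable ψ P := integrable_of_bdd hψc.aestronglyMeasurable hCψ
  have comp : ∀ (μ : MeasureTheory.Measure S), MeasureTheory.IsProbabilityMeasure μ →
      MeasureTheory.Integrable ψ μ → ∀ r : ℝ,
      (∫ x, (c + r * ψ x) ∂μ) = c + r * ∫ x, ψ x ∂μ := by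
    intro μ hμ hi r
    rw [MeasureTheory.integral_add (MeasureTheory.integrable_const c) (hi.const_mul r),
      MeasureTheory.integral_const, MeasureTheory.integral_const_mul]
    simp [measure_univ]
  have comp' : ∀ (μ : MeasureTheory.Measure S), MeasureTheory.IsProbabilityMeasure μ →
      MeasureTheory.Integrable ψ μ →
      (∫ x, (c - ε * ψ x) ∂μ) = c - ε * ∫ x, ψ x ∂μ := by
    intro μ hμ hi
    rw [MeasureTheory.integral_sub (MeasureTheory.integrable_const c) (hi.const_mul ε),
      MeasureTheory.integral_const, MeasureTheory.integral_const_mul]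
    simp [measure_univ]
  have e1 : (∫ x, (c + ε * ψ x) ∂Q) ≤ ∫ x, (c + ε * ψ x) ∂P := hle _ hg1
  have e2 : (∫ x, (c - ε * ψ x) ∂Q) ≤ ∫ x, (c - ε * ψ x) ∂P := hle _ hg2
  rw [comp Q hQ hiQ ε, comp P hP hiP ε] at e1
  rw [comp' Q hQ hiQ, comp' P hP hiP] at e2
  have h1 : (∫ x, ψ x ∂Q) ≤ ∫ x, ψ x ∂P := by nlinarith
  have h2 : (∫ x, ψ x ∂P) ≤ ∫ x, ψ x ∂Q := by nlinarith
  linarith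


/-- On a complete separable metric space, for admissible `f` and
admissible `Γ ⊆ C_b(S)`: (i) if `Γ` is strictly admissible then `W^Γ` has the divergence
property; (ii) if both `f` and `Γ` are strictly admissible then `D_f^Γ` has the divergence
property. -/
theorem stmt11 {S : Type*} [MetricSpace S] [CompleteSpace S]
    [TopologicalSpace.SeparableSpace S] [MeasurableSpace S] [BorelSpace S]
    (a b : EReal) (f : ℝ → EReal) (hf : IsF1 a b f) (hfa : AdmissibleF f)
    (Γ : Set (S → ℝ)) (hΓ : AdmissibleGamma Γ) :
    (StrictlyAdmissibleGamma Γ →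
      ∀ Q P : Measure S, IsProbabilityMeasure Q → IsProbabilityMeasure P →
        0 ≤ ipmW Γ Q P ∧ (ipmW Γ Q P = 0 ↔ Q = P))
    ∧ (StrictlyConvexAtOne f → StrictlyAdmissibleGamma Γ →
      ∀ Q P : Measure S, IsProbabilityMeasure Q → IsProbabilityMeasure P →
        0 ≤ fGammaDiv f Γ Q P ∧ (fGammaDiv f Γ Q P = 0 ↔ Q = P)) := by
  obtain ⟨h0Γ, hconv, hΓCb, _hclosed⟩ := hΓ
  have hInt : ∀ g ∈ Γ, ∀ (μ : Measure S), IsProbabilityMeasure μ → Integrable g μ := by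
    intro g hg μ hμ
    obtain ⟨hgc, C, hC⟩ := hΓCb hg
    exact integrable_of_bdd hgc.aestronglyMeasurable hC
  constructor
  · -- Part (i)
    intro hsΓ Q P hQ hP
    have hWrfl : ipmW Γ Q P
        = ⨆ g ∈ Γ, (((∫ x, g x ∂Q : ℝ) : EReal) - ((∫ x, g x ∂P : ℝ) : EReal)) := rfl
    have hW0 : (0 : EReal) ≤ ipmW Γ Q P := by
      have h := (le_iSup₂ (f := fun (g : S → ℝ) (_ : g ∈ Γ) =>
        (((∫ x, g x ∂Q : ℝ) : EReal) - ((∫ x, g x ∂P : ℝ) : EReal)))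
        (fun _ => (0 : ℝ)) h0Γ).trans_eq hWrfl.symm
      have h0 : (((∫ x, (fun _ : S => (0:ℝ)) x ∂Q : ℝ) : EReal)
          - ((∫ x, (fun _ : S => (0:ℝ)) x ∂P : ℝ) : EReal)) = 0 := by
        simp
      exact (le_of_eq h0.symm).trans h
    refine ⟨hW0, fun hW => ?_, fun hQP => ?_⟩
    · refine det_of_le hsΓ hQ hP fun g hg => ?_
      have h := (le_iSup₂ (f := fun (g : S → ℝ) (_ : g ∈ Γ) =>
        (((∫ x, g x ∂Q : ℝ) : EReal) - ((∫ x, g x ∂P : ℝ) : EReal))) g hg).trans_eq hWrfl.symm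
      rw [hW, ← EReal.coe_sub] at h
      have h' : (∫ x, g x ∂Q) - (∫ x, g x ∂P) ≤ 0 := by exact_mod_cast h
      linarith
    · subst hQP
      refine le_antisymm ?_ hW0
      rw [hWrfl]
      refine iSup₂_le fun g hg => ?_
      rw [← EReal.coe_sub]
      simp
  · -- Part (ii)
    intro hsc hsΓ Q P hQ hP
    obtain ⟨y₀, hsub⟩ := exists_subgrad hf
    have hDrfl : fGammaDiv f Γ Q P
        = ⨆ g ∈ Γ, (((∫ x, g x ∂Q : ℝ) : EReal) - LambdaF f P g) := rfl
    have hL0le : LambdaF f P (fun _ => (0 : ℝ)) ≤ 0 := lambda_zero_le hsub P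
    have hD0 : (0 : EReal) ≤ fGammaDiv f Γ Q P := by
      have h := (le_iSup₂ (f := fun (g : S → ℝ) (_ : g ∈ Γ) =>
        (((∫ x, g x ∂Q : ℝ) : EReal) - LambdaF f P g)) (fun _ => (0 : ℝ)) h0Γ).trans_eq
        hDrfl.symm
      refine le_trans ?_ h
      have hi0 : (∫ x, (fun _ : S => (0:ℝ)) x ∂Q) = (0:ℝ) := by simp
      rw [hi0]
      have h2 := EReal.sub_le_sub (le_refl (((0:ℝ) : EReal))) hL0le
      calc (0 : EReal) = ((0:ℝ) : EReal) - 0 := by norm_cast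
        _ ≤ ((0:ℝ) : EReal) - LambdaF f P (fun _ => (0:ℝ)) := h2
    refine ⟨hD0, fun hD => ?_, fun hQP => ?_⟩
    · -- hard direction
      refine det_of_le hsΓ hQ hP fun g hg => ?_
      obtain ⟨hgc, C0, hC0⟩ := hΓCb hg
      set C : ℝ := max C0 0 + 1 with hCd
      have hC : ∀ x, |g x| ≤ C := fun x =>
        (hC0 x).trans (by rw [hCd]; have := le_max_left C0 0; linarith)
      have hCpos : (0:ℝ) < C := by rw [hCd]; have := le_max_right C0 0; linarith
      set K : ℝ := 2 * C + 1 with hKd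
      have hK : (0:ℝ) < K := by rw [hKd]; linarith
      have hgiP : Integrable g P := integrable_of_bdd hgc.aestronglyMeasurable hC
      have hgiQ : Integrable g Q := integrable_of_bdd hgc.aestronglyMeasurable hC
      have hGP : |∫ x, g x ∂P| ≤ C := by
        have h := norm_integral_le_of_norm_le_const (f := g) (μ := P) (C := C)
          (ae_of_all _ fun x => by rw [Real.norm_eq_abs]; exact hC x)
        rw [Real.norm_eq_abs] at h
        simpa [measure_univ] using h
      have main : ∀ ε : ℝ, 0 < ε → (∫ x, g x ∂Q) ≤ (∫ x, g x ∂P) + ε * K := by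
        intro ε hε
        rcases sides hf hsc hsub with hA | hB
        · -- Case A
          obtain ⟨s₀, hs₀, hbd⟩ := caseA_bound hf hsub hA hε
          set m : ℝ := -(C + 1) with hmd
          set t : ℝ := min (s₀ / K) 1 with htd
          have ht0 : 0 < t := lt_min (div_pos hs₀ hK) one_pos
          have ht1 : t ≤ 1 := min_le_right _ _
          have htg : (fun x => t * g x) ∈ Γ := by
            have hh := hconv h0Γ hg (by linarith : (0:ℝ) ≤ 1 - t) (le_of_lt ht0) (by ring)
            have hfeq : ((1 - t) • (fun _ : S => (0:ℝ)) + t • g) = fun x => t * g x := by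
              funext x
              simp [smul_eq_mul]
            rwa [hfeq] at hh
          have hΛ : LambdaF f P (fun x => t * g x)
              ≤ ((t * ((∫ x, g x ∂P) + ε * K) : ℝ) : EReal) := by
            have hν : LambdaF f P (fun x => t * g x) ≤ ((t * m - y₀ : ℝ) : EReal)
                + eIntegral P (fun x => fstar f ((t * g x) - (t * m - y₀))) :=
              iInf_le _ (t * m - y₀)
            have hple : ∀ x : S, fstar f ((t * g x) - (t * m - y₀))
                ≤ ((y₀ + (1 + ε) * (t * (g x - m)) : ℝ) : EReal) := by
              intro x
              have harg : (t * g x) - (t * m - y₀) = y₀ + t * (g x - m) := by ring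
              rw [harg]
              have hgm1 : 1 ≤ g x - m := by
                have := (abs_le.mp (hC x)).1; rw [hmd]; linarith
              have hgmK : g x - m ≤ K := by
                have := (abs_le.mp (hC x)).2; rw [hmd, hKd]; linarith
              have hspos : 0 < t * (g x - m) := mul_pos ht0 (by linarith)
              have hsle : t * (g x - m) ≤ s₀ := by
                have h1 : t ≤ s₀ / K := min_le_left _ _
                have h2 := mul_le_mul h1 hgmK (by linarith) (le_of_lt (div_pos hs₀ hK))
                rwa [div_mul_cancel₀ _ (ne_of_gt hK)] at h2
              exact le_trans (hbd _ hspos hsle) (EReal.coe_le_coe_iff.mpr (le_of_eq (by ring)))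
            have hsubint : Integrable (fun x => g x - m) P := hgiP.sub (integrable_const m)
            have hmul : Integrable (fun x => (1 + ε) * (t * (g x - m))) P :=
              (hsubint.const_mul t).const_mul (1 + ε)
            have hu : Integrable (fun x => y₀ + (1 + ε) * (t * (g x - m))) P :=
              (integrable_const y₀).add hmul
            have hintg : (∫ x, (y₀ + (1 + ε) * (t * (g x - m))) ∂P)
                = y₀ + (1 + ε) * (t * ((∫ x, g x ∂P) - m)) := by
              rw [integral_add (integrable_const y₀) hmul,
                integral_const, integral_const_mul, integral_const_mul,
                integral_sub hgiP (integrable_const m), integral_const]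
              simp [measure_univ]
            have hE := eIntegral_le_of_bound hu hple
            rw [hintg] at hE
            refine le_trans (le_trans hν (add_le_add_right hE _)) ?_
            rw [← EReal.coe_add]
            refine EReal.coe_le_coe_iff.mpr ?_
            have hGm : (∫ x, g x ∂P) - m ≤ K := by
              rw [hmd, hKd]; have := (abs_le.mp hGP).2; linarith
            nlinarith [mul_le_mul_of_nonneg_left hGm
              (mul_nonneg (le_of_lt hε) (le_of_lt ht0))]
          have hterm : (((∫ x, t * g x ∂Q : ℝ) : EReal) - LambdaF f P (fun x => t * g x)) ≤ 0 := by
            have h := (le_iSup₂ (f := fun (g : S → ℝ) (_ : g ∈ Γ) =>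
              (((∫ x, g x ∂Q : ℝ) : EReal) - LambdaF f P g)) _ htg).trans_eq hDrfl.symm
            rwa [hD] at h
          have hcoe : ((∫ x, t * g x ∂Q : ℝ) : EReal)
              - ((t * ((∫ x, g x ∂P) + ε * K) : ℝ) : EReal) ≤ 0 :=
            le_trans (EReal.sub_le_sub (le_refl _) hΛ) hterm
          rw [← EReal.coe_sub] at hcoe
          have hreal : (∫ x, t * g x ∂Q) - t * ((∫ x, g x ∂P) + ε * K) ≤ 0 := by
            exact_mod_cast hcoe
          have hQe : (∫ x, t * g x ∂Q) = t * ∫ x, g x ∂Q := integral_const_mul t g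
          rw [hQe] at hreal
          have h5 : t * (∫ x, g x ∂Q) ≤ t * ((∫ x, g x ∂P) + ε * K) := by linarith
          have := (mul_le_mul_iff_of_pos_left ht0).mp h5
          linarith
        · -- Case B
          obtain ⟨s₀, hs₀, hbd⟩ := caseB_bound hf hsub hB hε
          set m : ℝ := C + 1 with hmd
          set t : ℝ := min (s₀ / K) 1 with htd
          have ht0 : 0 < t := lt_min (div_pos hs₀ hK) one_pos
          have ht1 : t ≤ 1 := min_le_right _ _
          have htg : (fun x => t * g x) ∈ Γ := by
            have hh := hconv h0Γ hg (by linarith : (0:ℝ) ≤ 1 - t) (le_of_lt ht0) (by ring)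
            have hfeq : ((1 - t) • (fun _ : S => (0:ℝ)) + t • g) = fun x => t * g x := by
              funext x
              simp [smul_eq_mul]
            rwa [hfeq] at hh
          have hΛ : LambdaF f P (fun x => t * g x)
              ≤ ((t * ((∫ x, g x ∂P) + ε * K) : ℝ) : EReal) := by
            have hν : LambdaF f P (fun x => t * g x) ≤ ((t * m - y₀ : ℝ) : EReal)
                + eIntegral P (fun x => fstar f ((t * g x) - (t * m - y₀))) :=
              iInf_le _ (t * m - y₀)
            have hple : ∀ x : S, fstar f ((t * g x) - (t * m - y₀))
                ≤ ((y₀ + (1 - ε) * (t * (g x - m)) : ℝ) : EReal) := by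
              intro x
              have harg : (t * g x) - (t * m - y₀) = y₀ + t * (g x - m) := by ring
              rw [harg]
              have hgm1 : g x - m ≤ -1 := by
                have := (abs_le.mp (hC x)).2; rw [hmd]; linarith
              have hgmK : -K ≤ g x - m := by
                have := (abs_le.mp (hC x)).1; rw [hmd, hKd]; linarith
              have hsneg : t * (g x - m) < 0 :=
                mul_neg_of_pos_of_neg ht0 (by linarith)
              have hsge : -s₀ ≤ t * (g x - m) := by
                have h1 : t ≤ s₀ / K := min_le_left _ _
                have h2 : t * (-(g x - m)) ≤ (s₀ / K) * K :=
                  mul_le_mul h1 (by linarith) (by linarith) (le_of_lt (div_pos hs₀ hK))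
                rw [div_mul_cancel₀ _ (ne_of_gt hK)] at h2
                nlinarith [h2]
              have := hbd (t * (g x - m)) hsneg hsge
              exact le_trans this (EReal.coe_le_coe_iff.mpr (le_of_eq (by ring)))
            have hsubint : Integrable (fun x => g x - m) P := hgiP.sub (integrable_const m)
            have hmul : Integrable (fun x => (1 - ε) * (t * (g x - m))) P :=
              (hsubint.const_mul t).const_mul (1 - ε)
            have hu : Integrable (fun x => y₀ + (1 - ε) * (t * (g x - m))) P :=
              (integrable_const y₀).add hmul
            have hintg : (∫ x, (y₀ + (1 - ε) * (t * (g x - m))) ∂P)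
                = y₀ + (1 - ε) * (t * ((∫ x, g x ∂P) - m)) := by
              rw [integral_add (integrable_const y₀) hmul,
                integral_const, integral_const_mul, integral_const_mul,
                integral_sub hgiP (integrable_const m), integral_const]
              simp [measure_univ]
            have hE := eIntegral_le_of_bound hu hple
            rw [hintg] at hE
            refine le_trans (le_trans hν (add_le_add_right hE _)) ?_
            rw [← EReal.coe_add]
            refine EReal.coe_le_coe_iff.mpr ?_
            have hGm : m - (∫ x, g x ∂P) ≤ K := by
              rw [hmd, hKd]; have := (abs_le.mp hGP).1; linarith
            nlinarith [mul_le_mul_of_nonneg_left hGm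
              (mul_nonneg (le_of_lt hε) (le_of_lt ht0))]
          have hterm : (((∫ x, t * g x ∂Q : ℝ) : EReal) - LambdaF f P (fun x => t * g x)) ≤ 0 := by
            have h := (le_iSup₂ (f := fun (g : S → ℝ) (_ : g ∈ Γ) =>
              (((∫ x, g x ∂Q : ℝ) : EReal) - LambdaF f P g)) _ htg).trans_eq hDrfl.symm
            rwa [hD] at h
          have hcoe : ((∫ x, t * g x ∂Q : ℝ) : EReal)
              - ((t * ((∫ x, g x ∂P) + ε * K) : ℝ) : EReal) ≤ 0 :=
            le_trans (EReal.sub_le_sub (le_refl _) hΛ) hterm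
          rw [← EReal.coe_sub] at hcoe
          have hreal : (∫ x, t * g x ∂Q) - t * ((∫ x, g x ∂P) + ε * K) ≤ 0 := by
            exact_mod_cast hcoe
          have hQe : (∫ x, t * g x ∂Q) = t * ∫ x, g x ∂Q := integral_const_mul t g
          rw [hQe] at hreal
          have h5 : t * (∫ x, g x ∂Q) ≤ t * ((∫ x, g x ∂P) + ε * K) := by linarith
          have := (mul_le_mul_iff_of_pos_left ht0).mp h5
          linarith
      by_contra hlt
      push_neg at hlt
      set d : ℝ := (∫ x, g x ∂Q) - (∫ x, g x ∂P) with hdd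
      have hd0 : 0 < d := by rw [hdd]; linarith
      have hm := main (d / (2 * K)) (div_pos hd0 (by linarith))
      have he : (d / (2 * K)) * K = d / 2 := by
        field_simp
      rw [he] at hm
      rw [hdd] at hm
      linarith
    · subst hQP
      refine le_antisymm ?_ hD0
      rw [hDrfl]
      refine iSup₂_le fun g hg => ?_
      have hΛ := lambda_ge hf (hInt g hg Q hQ)
      refine le_trans (EReal.sub_le_sub (le_refl _) hΛ) ?_
      rw [← EReal.coe_sub]
      simp
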